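/- Let r ≥ 1 and n' ≥ r^2 be integers, and set n = 5n'r, p = 5r, m = (n')^2, s = ⌊(n')^2/2⌋. Then C(n+p, p) ≥ (m·C(s+r, r) + 1)/(m - s). In particular, the condition for existence of an (s,r)-elusive mapping in Pol^p(F^n, F^m) with C(n+p,p) prescribed image points is satisfied. -/

import Mathlib

/-- `k^b ≤ C(k·b, b)`: the binomial coefficient dominates the power. -/
lemma pow_le_choose_mul (k b : ℕ) : k ^ b ≤ (k * b).choose b := by
  induction b with
  | zero => simp
  | succ b ih =>
    rcases Nat.eq_zero_or_pos k with h | h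
    · simp [h]
    · have hid := Nat.add_one_mul_choose_eq (k * b + k - 1) b
      have h2 : (k * b + k - 1).succ = k * (b + 1) := by
        have : 1 ≤ k * b + k := by nlinarith
        ring_nf
        omega
      rw [Nat.succ_eq_add_one] at h2; rw [h2] at hid
      have hC : (k * (b + 1)).choose (b + 1) = k * (k * b + k - 1).choose b := by
        have hb1 : 0 < b + 1 := Nat.succ_pos b
        refine Nat.eq_of_mul_eq_mul_right hb1 ?_
        rw [← hid]; ring
      rw [hC, pow_succ, mul_comm (k ^ b) k]
      refine Nat.mul_le_mul_left k (le_trans ih (Nat.choose_le_choose b ?_))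
      omega

/-- The arithmetic inequality of Proposition `c45`: for integers `r ≥ 1` and `n' ≥ r²`,
with `n = 5n'r`, `p = 5r`, `m = (n')²`, `s = ⌊(n')²/2⌋`, one has
`C(n+p, p) ≥ (m·C(s+r, r) + 1)/(m - s)`. -/
theorem stmt18 (r n' : ℕ) (hr : 1 ≤ r) (hn : r ^ 2 ≤ n')
    (n p m s : ℕ) (hn2 : n = 5 * n' * r) (hp : p = 5 * r)
    (hm : m = n' ^ 2) (hs : s = n' ^ 2 / 2) :
    ((m * (s + r).choose r + 1 : ℚ)) / ((m : ℚ) - (s : ℚ)) ≤ ((n + p).choose p : ℚ) := by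
  have hn1 : 1 ≤ n' := le_trans (by nlinarith) hn
  have hm1 : 1 ≤ m := by rw [hm]; nlinarith
  have hsm2 : 2 * s ≤ m := by rw [hs, hm]; omega
  have hsm : s < m := by rw [hs, hm]; omega
  set C := (s + r).choose r with hC
  set B := (n + p).choose p with hB
  have hrn : r ≤ n' := le_trans (by nlinarith) hn
  have hsr : s + r ≤ n' ^ 2 := by
    rw [hs]
    rcases Nat.lt_or_ge n' 2 with h | h
    · interval_cases n' <;> omega
    · have h1 : 2 * n' ≤ n' * n' := by nlinarith
      have h2 : n' ^ 2 = n' * n' := sq n'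
      omega
  have hCle : C ≤ (n' ^ 2) ^ r :=
    le_trans (Nat.choose_le_pow _ _) (Nat.pow_le_pow_left hsr r)
  have hBge : (n' + 1) ^ (5 * r) ≤ B := by
    have h := pow_le_choose_mul (n' + 1) (5 * r)
    have heq : (n' + 1) * (5 * r) = n + p := by rw [hn2, hp]; ring
    rw [heq] at h
    rw [hp] at h
    rw [hB, hp]
    exact h
  have h2r : 2 ≤ 2 ^ r := by
    calc (2:ℕ) = 2 ^ 1 := (pow_one 2).symm
    _ ≤ 2 ^ r := Nat.pow_le_pow_right (by norm_num) hr
  have hkey : 2 * C + 2 ≤ B := by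
    refine le_trans ?_ hBge
    have h5 : (n' + 1) ^ (5 * r) = ((n' + 1) ^ 5) ^ r := by
      rw [pow_mul]
    rw [h5]
    have hstep : 2 * n' ^ 2 + 2 ≤ (n' + 1) ^ 5 := by
      calc 2 * n' ^ 2 + 2 ≤ 2 * (n' + 1) ^ 2 := by nlinarith
        _ ≤ (n' + 1) ^ 3 * (n' + 1) ^ 2 := by
            have h3 : 2 ≤ (n' + 1) ^ 3 :=
              le_trans (by norm_num : (2:ℕ) ≤ 2 ^ 3) (Nat.pow_le_pow_left (by omega) 3)
            exact Nat.mul_le_mul_right _ h3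
        _ = (n' + 1) ^ 5 := by ring
    calc 2 * C + 2 ≤ 2 * (n' ^ 2) ^ r + 2 :=
          Nat.add_le_add (Nat.mul_le_mul_left 2 hCle) le_rfl
      _ ≤ 2 ^ r * (n' ^ 2) ^ r + 2 ^ r :=
          Nat.add_le_add (Nat.mul_le_mul_right _ h2r) h2r
      _ = (2 * n' ^ 2) ^ r + 2 ^ r := by rw [mul_pow]
      _ ≤ (2 * n' ^ 2 + 2) ^ r :=
          pow_add_pow_le (Nat.zero_le _) (Nat.zero_le _) (by omega)
      _ ≤ ((n' + 1) ^ 5) ^ r := Nat.pow_le_pow_left hstep r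
  -- natural number inequality with the denominator
  obtain ⟨t, ht⟩ : ∃ t, m = s + t := ⟨m - s, by omega⟩
  have ht1 : 1 ≤ t := by omega
  have ht2 : m ≤ 2 * t := by omega
  have hnat : m * C + 1 ≤ B * t := by nlinarith
  have hden : (0:ℚ) < (m : ℚ) - (s : ℚ) := by
    have : (s:ℚ) < (m:ℚ) := by exact_mod_cast hsm
    linarith
  rw [div_le_iff₀ hden]
  have : ((m:ℚ) - (s:ℚ)) = (t : ℚ) := by
    rw [ht]; push_cast; ring
  rw [this]
  exact_mod_cast hnat
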